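/- Let I ⊆ K[x_1,…,x_n] be a squarefree monomial ideal such that I^{(s)} = I^s for all s ≥ 1. Then I has the packing property: every ideal obtained from I by setting any subset of variables equal to 0 or 1 is König. -/

import Mathlib

open MvPolynomial

/-- `C` is a transversal (vertex cover) of the hypergraph with edge set `E`. -/
def IsTransversal {V : Type*} [DecidableEq V] (E : Finset (Finset V)) (C : Finset V) : Prop :=
  ∀ e ∈ E, (e ∩ C).Nonempty

/-- `C` is a minimal transversal of `E`. -/
def IsMinTransversal {V : Type*} [DecidableEq V] (E : Finset (Finset V)) (C : Finset V) : Prop :=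
  IsTransversal E C ∧ ∀ D ⊂ C, ¬ IsTransversal E D

/-- The minimum size of a transversal of `E` (the height of the corresponding
squarefree monomial ideal). -/
noncomputable def tau {V : Type*} [DecidableEq V] (E : Finset (Finset V)) : ℕ :=
  sInf {c : ℕ | ∃ C : Finset V, C.card = c ∧ IsTransversal E C}

/-- The hypergraph `E` is König: it has a matching (pairwise disjoint edges, i.e. a
regular sequence of monomials in the associated ideal) of size equal to the minimum
transversal size (the height). -/
def IsKonig {V : Type*} [DecidableEq V] (E : Finset (Finset V)) : Prop :=
  ∃ M : Finset (Finset V), M ⊆ E ∧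
    ((M : Set (Finset V)).Pairwise fun a b => Disjoint a b) ∧ M.card = tau E

noncomputable def ind {V : Type*} [DecidableEq V] (e : Finset V) : V →₀ ℕ :=
  ∑ x ∈ e, Finsupp.single x 1

lemma ind_apply {V : Type*} [DecidableEq V] (e : Finset V) (v : V) :
    ind e v = if v ∈ e then 1 else 0 := by
  classical
  simp [ind, Finsupp.finset_sum_apply, Finsupp.single_apply]

lemma ind_insert {V : Type*} [DecidableEq V] (e : Finset V) (a : V) (ha : a ∉ e) :
    ind (insert a e) = Finsupp.single a 1 + ind e := by
  rw [ind, Finset.sum_insert ha]; rfl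

lemma prod_X_eq {K V : Type*} [CommSemiring K] [DecidableEq V] (e : Finset V) :
    (∏ x ∈ e, (X x : MvPolynomial V K)) = monomial (ind e) 1 := by
  classical
  induction e using Finset.induction_on with
  | empty => simp [ind]
  | @insert a s hx ih =>
    rw [Finset.prod_insert hx, ih, ind_insert s a hx, X, monomial_mul, one_mul]

lemma msum_apply {V : Type*} (m : Multiset (V →₀ ℕ)) (v : V) :
    m.sum v = (m.map (fun f => f v)).sum := by
  induction m using Multiset.induction_on with
  | empty => simp
  | cons a s ih => simp [ih]

lemma prod_pow_mem_pow {R V : Type*} [CommRing R] (P : Ideal R) (t : Finset V) (f : V → R)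
    (b : V → ℕ) (h : ∀ v ∈ t, f v ∈ P) :
    (∏ v ∈ t, f v ^ b v) ∈ P ^ (∑ v ∈ t, b v) := by
  classical
  induction t using Finset.induction_on with
  | empty => simp [Ideal.one_eq_top]
  | @insert a s hx ih =>
    rw [Finset.prod_insert hx, Finset.sum_insert hx, pow_add]
    exact Ideal.mul_mem_mul (Ideal.pow_mem_pow (h a (Finset.mem_insert_self a s)) _)
      (ih fun v hv => h v (Finset.mem_insert_of_mem hv))

lemma exists_sub {V : Type*} [DecidableEq V] (C : Finset V) :
    ∀ (s : ℕ) (a : V →₀ ℕ), s ≤ ∑ v ∈ C, a v →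
    ∃ b : V →₀ ℕ, b ≤ a ∧ b.support ⊆ C ∧ ∑ v ∈ C, b v = s := by
  intro s
  induction s with
  | zero => exact fun a _ => ⟨0, zero_le, by simp, by simp⟩
  | succ s ih =>
    intro a ha
    have hv : ∃ v ∈ C, a v ≠ 0 := by
      by_contra h
      push_neg at h
      rw [Finset.sum_eq_zero h] at ha; omega
    obtain ⟨v, hvC, hv⟩ := hv
    have h1 : Finsupp.single v 1 ≤ a := by
      rw [Finsupp.single_le_iff]; omega
    have hsing : ∑ w ∈ C, (Finsupp.single v 1 : V →₀ ℕ) w = 1 := by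
      rw [Finset.sum_eq_single_of_mem v hvC]
      · exact Finsupp.single_eq_same
      · intro w _ hw; exact Finsupp.single_eq_of_ne' (Ne.symm hw)
    have ha' : s ≤ ∑ w ∈ C, ((a - Finsupp.single v 1 : V →₀ ℕ) w) := by
      have e1 : ∑ w ∈ C, ((a - Finsupp.single v 1 : V →₀ ℕ) w)
          = ∑ w ∈ C, (a w - (Finsupp.single v 1 : V →₀ ℕ) w) :=
        Finset.sum_congr rfl fun w _ => Finsupp.tsub_apply a _ w
      rw [e1, Finset.sum_tsub_distrib C fun w _ => Finsupp.le_def.mp h1 w, hsing]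
      omega
    obtain ⟨b, hb, hbs, hbsum⟩ := ih (a - Finsupp.single v 1) ha'
    refine ⟨b + Finsupp.single v 1, ?_, ?_, ?_⟩
    · calc b + Finsupp.single v 1 ≤ (a - Finsupp.single v 1) + Finsupp.single v 1 :=
            add_le_add_left hb _
        _ = a := tsub_add_cancel_of_le h1
    · refine Finsupp.support_add.trans ?_
      refine Finset.union_subset hbs ?_
      refine (Finsupp.support_single_subset).trans ?_
      simpa using hvC
    · have e2 : ∑ w ∈ C, ((b + Finsupp.single v 1 : V →₀ ℕ) w)
          = (∑ w ∈ C, b w) + ∑ w ∈ C, (Finsupp.single v 1 : V →₀ ℕ) w := by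
        rw [← Finset.sum_add_distrib]
        exact Finset.sum_congr rfl fun w _ => Finsupp.add_apply b _ w
      rw [e2, hbsum, hsing]

lemma monomial_mem_pow {K V : Type*} [Field K] [DecidableEq V] (C : Finset V) (s : ℕ) (a : V →₀ ℕ) (h : s ≤ ∑ v ∈ C, a v) :
    (monomial a 1 : MvPolynomial V K) ∈
      (Ideal.span ((fun x : V => (X x : MvPolynomial V K)) '' ↑C)) ^ s := by
  obtain ⟨b, hba, hbs, hbsum⟩ := exists_sub C s a h
  set P := Ideal.span ((fun x : V => (X x : MvPolynomial V K)) '' ↑C) with hP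
  have hsum : ∑ v ∈ b.support, b v = s := by
    rw [← hbsum]
    exact Finset.sum_subset hbs fun v _ hv => Finsupp.notMem_support_iff.mp hv
  have key : (monomial b 1 : MvPolynomial V K) ∈ P ^ s := by
    rw [monomial_eq, C_1, one_mul, Finsupp.prod, ← hsum]
    exact prod_pow_mem_pow P b.support _ _ fun v hv =>
      Ideal.subset_span ⟨v, hbs hv, rfl⟩
  have heq : (monomial a 1 : MvPolynomial V K) = monomial (a - b) 1 * monomial b 1 := by
    rw [monomial_mul, one_mul, tsub_add_cancel_of_le hba]
  rw [heq]
  exact Ideal.mul_mem_left _ _ key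

def Tset {V : Type*} [DecidableEq V] (E : Finset (Finset V)) (s : ℕ) : Set (V →₀ ℕ) :=
  {b | ∃ l : Multiset (Finset V), (∀ e ∈ l, e ∈ E) ∧ Multiset.card l = s ∧ (l.map ind).sum = b}

lemma pow_le_span_T {K V : Type*} [Field K] [DecidableEq V] (E : Finset (Finset V)) (s : ℕ) :
    (Ideal.span ((fun e : Finset V => ∏ x ∈ e, (X x : MvPolynomial V K)) '' ↑E)) ^ s ≤
    Ideal.span ((fun b => (monomial b 1 : MvPolynomial V K)) '' Tset E s) := by
  induction s with
  | zero =>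
    rw [pow_zero]
    have h1 : (1 : MvPolynomial V K) ∈
        Ideal.span ((fun b => (monomial b 1 : MvPolynomial V K)) '' Tset E 0) := by
      refine Ideal.subset_span ⟨0, ⟨0, by simp⟩, by simp⟩
    rw [Ideal.one_eq_top, ← Ideal.eq_top_iff_one] at *
    exact le_of_eq h1.symm
  | succ s ih =>
    have hI1 : Ideal.span ((fun e : Finset V => ∏ x ∈ e, (X x : MvPolynomial V K)) '' ↑E) ≤
        Ideal.span ((fun b => (monomial b 1 : MvPolynomial V K)) '' Tset E 1) := by
      rw [Ideal.span_le]
      rintro - ⟨e, he, rfl⟩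
      refine Ideal.subset_span ⟨ind e, ⟨{e}, by simpa using he, by simp, by simp⟩, ?_⟩
      simp [prod_X_eq]
    calc (Ideal.span ((fun e : Finset V => ∏ x ∈ e, (X x : MvPolynomial V K)) '' ↑E)) ^ (s+1)
        = _ ^ s * _ := pow_succ _ s
      _ ≤ Ideal.span ((fun b => (monomial b 1 : MvPolynomial V K)) '' Tset E s) *
          Ideal.span ((fun b => (monomial b 1 : MvPolynomial V K)) '' Tset E 1) :=
            Ideal.mul_mono ih hI1
      _ ≤ Ideal.span ((fun b => (monomial b 1 : MvPolynomial V K)) '' Tset E (s+1)) := by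
          rw [Ideal.span_mul_span']
          rw [Ideal.span_le]
          rintro - ⟨-, ⟨b1, ⟨l1, hl1, hc1, hs1⟩, rfl⟩, -, ⟨b2, ⟨l2, hl2, hc2, hs2⟩, rfl⟩, rfl⟩
          show (monomial b1 1 * monomial b2 1 : MvPolynomial V K) ∈ _
          have : (monomial b1 1 * monomial b2 1 : MvPolynomial V K) = monomial (b1 + b2) 1 := by
            rw [monomial_mul, one_mul]
          rw [this]
          refine Ideal.subset_span ⟨b1 + b2, ⟨l1 + l2, ?_, ?_, ?_⟩, rfl⟩
          · intro e he
            rcases Multiset.mem_add.mp he with h | h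
            exacts [hl1 e h, hl2 e h]
          · simp [hc1, hc2]
          · simp [← hs1, ← hs2]

lemma star {K V : Type*} [Field K] [DecidableEq V] (E : Finset (Finset V))
    (hsym : ∀ s : ℕ, 1 ≤ s →
      (⨅ C ∈ {C : Finset V | IsMinTransversal E C},
        (Ideal.span ((fun x : V => (X x : MvPolynomial V K)) '' ↑C)) ^ s) =
      (Ideal.span ((fun e : Finset V => ∏ x ∈ e, (X x : MvPolynomial V K)) '' ↑E)) ^ s)
    (s : ℕ) (hs : 1 ≤ s) (a : V →₀ ℕ)
    (ha : ∀ C : Finset V, IsMinTransversal E C → s ≤ ∑ v ∈ C, a v) :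
    ∃ l : Multiset (Finset V), (∀ e ∈ l, e ∈ E) ∧ Multiset.card l = s ∧ (l.map ind).sum ≤ a := by
  classical
  have h1 : (monomial a 1 : MvPolynomial V K) ∈
      ⨅ C ∈ {C : Finset V | IsMinTransversal E C},
        (Ideal.span ((fun x : V => (X x : MvPolynomial V K)) '' ↑C)) ^ s := by
    rw [Submodule.mem_iInf]
    intro C
    rw [Submodule.mem_iInf]
    intro hC
    exact monomial_mem_pow C s a (ha C hC)
  rw [hsym s hs] at h1
  have h2 := pow_le_span_T (K := K) E s h1
  rw [mem_ideal_span_monomial_image] at h2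
  have hsupp : a ∈ (monomial a (1 : K)).support := by
    rw [support_monomial]
    simp
  obtain ⟨b, ⟨l, hl, hc, hsum⟩, hba⟩ := h2 a hsupp
  exact ⟨l, hl, hc, hsum ▸ hba⟩

/-- If the squarefree monomial ideal `I` generated by the edges of `E` satisfies
`I^{(s)} = I^s` for all `s ≥ 1` (where `I^{(s)}` is the intersection of the `s`-th
powers of the minimal primes, given by minimal transversals), then `I` has the
packing property: every minor of `E`, obtained by deleting the vertices of `Z`
(setting variables to `0`) and contracting the vertices of `O` (setting variables
to `1`), is König. -/
theorem packing_of_symbolic_eq_ordinary {K V : Type*} [Field K] [Fintype V] [DecidableEq V]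
    (E : Finset (Finset V)) (hE : ∀ e ∈ E, e.Nonempty)
    (hsym : ∀ s : ℕ, 1 ≤ s →
      (⨅ C ∈ {C : Finset V | IsMinTransversal E C},
        (Ideal.span ((fun x : V => (X x : MvPolynomial V K)) '' ↑C)) ^ s) =
      (Ideal.span ((fun e : Finset V => ∏ x ∈ e, (X x : MvPolynomial V K)) '' ↑E)) ^ s) :
    ∀ Z O : Finset V, Disjoint Z O →
      IsKonig ((E.filter fun e => e ∩ Z = ∅).image fun e => e \ O) := by
  classical
  intro Z O hZO
  set E' := (E.filter fun e => e ∩ Z = ∅).image (fun e => e \ O) with hE'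
  unfold IsKonig
  by_cases h0 : tau E' = 0
  · exact ⟨∅, Finset.empty_subset _, by simp, by simp [h0]⟩
  have hs : 1 ≤ tau E' := Nat.one_le_iff_ne_zero.mpr h0
  have htau_le : ∀ T : Finset V, IsTransversal E' T → tau E' ≤ T.card := fun T hT =>
    Nat.sInf_le ⟨T, rfl, hT⟩
  have hempty : ∅ ∉ E' := by
    intro h
    apply h0
    have hset : {c : ℕ | ∃ C : Finset V, C.card = c ∧ IsTransversal E' C} = ∅ := by
      ext c
      simp only [Set.mem_setOf_eq, Set.mem_empty_iff_false, iff_false, not_exists]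
      rintro C ⟨-, hC⟩
      simpa using hC ∅ h
    rw [tau, hset, Nat.sInf_empty]
  set s := tau E' with hsdef
  set a : V →₀ ℕ := Finsupp.equivFunOnFinite.symm
    (fun v => if v ∈ Z then 0 else if v ∈ O then s else 1) with hadef
  have ha_app : ∀ v, a v = if v ∈ Z then 0 else if v ∈ O then s else 1 := fun v => rfl
  have haC : ∀ C : Finset V, IsMinTransversal E C → s ≤ ∑ v ∈ C, a v := by
    intro C hC
    by_cases hCO : (C ∩ O).Nonempty
    · obtain ⟨v, hv⟩ := hCO
      rw [Finset.mem_inter] at hv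
      have hvZ : v ∉ Z := fun h => (Finset.disjoint_left.mp hZO h) hv.2
      have hav : a v = s := by rw [ha_app]; simp [hvZ, hv.2]
      calc s = a v := hav.symm
        _ ≤ ∑ v ∈ C, a v := Finset.single_le_sum (fun i _ => Nat.zero_le _) hv.1
    · rw [Finset.not_nonempty_iff_eq_empty] at hCO
      have htr : IsTransversal E' (C \ Z) := by
        intro f hf
        rw [hE'] at hf
        simp only [Finset.mem_image, Finset.mem_filter] at hf
        obtain ⟨e, ⟨heE, heZ⟩, rfl⟩ := hf
        obtain ⟨w, hw⟩ := hC.1 e heE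
        rw [Finset.mem_inter] at hw
        have hwO : w ∉ O := fun h => by
          have h2 := Finset.mem_inter.mpr ⟨hw.2, h⟩
          rw [hCO] at h2; simp at h2
        have hwZ : w ∉ Z := fun h => by
          have h2 := Finset.mem_inter.mpr ⟨hw.1, h⟩
          rw [heZ] at h2; simp at h2
        exact ⟨w, Finset.mem_inter.mpr
          ⟨Finset.mem_sdiff.mpr ⟨hw.1, hwO⟩, Finset.mem_sdiff.mpr ⟨hw.2, hwZ⟩⟩⟩
      have h1 : s ≤ (C \ Z).card := htau_le _ htr
      have h2 : (C \ Z).card ≤ ∑ v ∈ C \ Z, a v := by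
        rw [Finset.card_eq_sum_ones]
        refine Finset.sum_le_sum fun v hv => ?_
        rw [Finset.mem_sdiff] at hv
        have hvO : v ∉ O := fun h => by
          have h3 := Finset.mem_inter.mpr ⟨hv.1, h⟩
          rw [hCO] at h3; simp at h3
        rw [ha_app]; simp [hv.2, hvO]
      have h3 : ∑ v ∈ C \ Z, a v ≤ ∑ v ∈ C, a v :=
        Finset.sum_le_sum_of_subset Finset.sdiff_subset
      omega
  obtain ⟨l, hlE, hlcard, hlsum⟩ := star E hsym s hs a haC
  have hle : ∀ e ∈ l, ind e ≤ (l.map ind).sum := by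
    intro e he
    obtain ⟨l2, rfl⟩ := Multiset.exists_cons_of_mem he
    rw [Multiset.map_cons, Multiset.sum_cons]
    exact le_add_of_nonneg_right zero_le
  have hZl : ∀ e ∈ l, e ∩ Z = ∅ := by
    intro e he
    rw [Finset.eq_empty_iff_forall_notMem]
    intro v hv
    rw [Finset.mem_inter] at hv
    have h1 : ind e v = 1 := by rw [ind_apply]; simp [hv.1]
    have h3 := (Finsupp.le_def.mp (hle e he)) v
    have h4 := (Finsupp.le_def.mp hlsum) v
    rw [ha_app] at h4
    simp only [hv.2, if_true] at h4
    omega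
  set l' := l.map (fun e => e \ O) with hl'def
  have hl'mem : ∀ f ∈ l', f ∈ E' := by
    intro f hf
    rw [hl'def, Multiset.mem_map] at hf
    obtain ⟨e, he, rfl⟩ := hf
    rw [hE']
    exact Finset.mem_image.mpr ⟨e, Finset.mem_filter.mpr ⟨hlE e he, hZl e he⟩, rfl⟩
  have hbound : ∀ v, ((l'.map ind).sum) v ≤ 1 := by
    intro v
    rw [msum_apply]
    by_cases hvO : v ∈ O
    · have hz : ∀ x ∈ (l'.map ind).map (fun f => f v), x = 0 := by
        intro x hx
        simp only [Multiset.map_map, Multiset.mem_map, Function.comp] at hx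
        obtain ⟨e, he, rfl⟩ := hx
        obtain ⟨e0, he0, rfl⟩ := Multiset.mem_map.mp he
        rw [ind_apply]
        simp [hvO]
      rw [Multiset.sum_eq_zero hz]
      omega
    · have h4 := (Finsupp.le_def.mp hlsum) v
      have hma : ((l.map ind).sum) v = ((l.map ind).map (fun f => f v)).sum := msum_apply _ v
      have heq : (l'.map ind).map (fun f => f v) = (l.map ind).map (fun f => f v) := by
        rw [hl'def]
        simp only [Multiset.map_map, Function.comp]
        refine Multiset.map_congr rfl ?_
        intro e he
        rw [ind_apply, ind_apply]
        simp [Finset.mem_sdiff, hvO]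
      rw [heq, ← hma]
      have hav : a v ≤ 1 := by
        rw [ha_app]; by_cases hvZ : v ∈ Z <;> simp [hvZ, hvO]
      omega
  have hcard' : Multiset.card l' = s := by rw [hl'def, Multiset.card_map, hlcard]
  have hnodup : l'.Nodup := by
    rw [Multiset.nodup_iff_count_le_one]
    intro f
    by_contra hcnt
    push_neg at hcnt
    have hrep : Multiset.replicate 2 f ≤ l' :=
      Multiset.le_count_iff_replicate_le.mp (by omega)
    have hfmem : f ∈ l' := Multiset.count_pos.mp (by omega)
    have hfE' : f ∈ E' := hl'mem f hfmem
    have hfne : f.Nonempty :=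
      Finset.nonempty_iff_ne_empty.mpr (fun h => hempty (h ▸ hfE'))
    obtain ⟨v, hv⟩ := hfne
    obtain ⟨u, hu⟩ := Multiset.le_iff_exists_add.mp hrep
    have hb := hbound v
    rw [hu, msum_apply, Multiset.map_add, Multiset.map_add, Multiset.sum_add,
      Multiset.map_replicate, Multiset.map_replicate, Multiset.sum_replicate] at hb
    rw [ind_apply] at hb
    simp [hv] at hb
    omega
  have hpair : ∀ f ∈ l', ∀ g ∈ l', f ≠ g → Disjoint f g := by
    intro f hf g hg hfg
    rw [Finset.disjoint_left]
    intro v hvf hvg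
    obtain ⟨m, hm⟩ := Multiset.exists_cons_of_mem hf
    have hgm : g ∈ m := by
      have := hm ▸ hg
      rcases Multiset.mem_cons.mp this with h | h
      · exact absurd h.symm hfg
      · exact h
    obtain ⟨m2, hm2⟩ := Multiset.exists_cons_of_mem hgm
    have hb := hbound v
    rw [hm, hm2, Multiset.map_cons, Multiset.map_cons, Multiset.sum_cons, Multiset.sum_cons]
      at hb
    simp only [Finsupp.add_apply, ind_apply, hvf, if_true, hvg] at hb
    omega
  refine ⟨l'.toFinset, ?_, ?_, ?_⟩
  · intro f hf
    exact hl'mem f (Multiset.mem_toFinset.mp hf)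
  · intro f hf g hg hfg
    exact hpair f (Multiset.mem_toFinset.mp (Finset.mem_coe.mp hf))
      g (Multiset.mem_toFinset.mp (Finset.mem_coe.mp hg)) hfg
  · rw [Multiset.toFinset_card_of_nodup hnodup, hcard']
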